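/- Let n and k be integers with n > 2k ≥ 2. Any resolving set S for the Kneser graph K(n,k) is also a resolving set for the Johnson graph J(n,k); consequently β(J(n,k)) ≤ β(K(n,k)). -/

import Mathlib

/-- The Johnson graph `J(n,k)`: vertices are the `k`-element subsets of `{1,...,n}`,
two vertices adjacent iff their intersection has `k-1` elements. -/
def johnsonGraph (n k : ℕ) : SimpleGraph {s : Finset (Fin n) // s.card = k} where
  Adj U W := U ≠ W ∧ (U.1 ∩ W.1).card = k - 1
  symm := by
    constructor
    intro U W h
    exact ⟨h.1.symm, by rw [Finset.inter_comm]; exact h.2⟩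
  loopless := by
    constructor
    intro U h
    exact h.1 rfl

/-- The Kneser graph `K(n,k)`: vertices are the `k`-element subsets of `{1,...,n}`,
two vertices adjacent iff the corresponding subsets are disjoint. -/
def kneserGraph (n k : ℕ) : SimpleGraph {s : Finset (Fin n) // s.card = k} where
  Adj U W := U ≠ W ∧ Disjoint U.1 W.1
  symm := by
    constructor
    intro U W h
    exact ⟨h.1.symm, h.2.symm⟩
  loopless := by
    constructor
    intro U h
    exact h.1 rfl

/-- A set `S` of vertices is a resolving set for `G` if every pair of distinct
vertices is resolved by some vertex of `S`, i.e. is at different distances from it. -/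
def resolvingSet {V : Type*} (G : SimpleGraph V) (S : Set V) : Prop :=
  ∀ u v : V, u ≠ v → ∃ x ∈ S, G.dist u x ≠ G.dist v x

/-- The metric dimension `β(G)`: the minimum cardinality of a resolving set for `G`. -/
noncomputable def metricDim {V : Type*} (G : SimpleGraph V) : ℕ :=
  sInf {m | ∃ S : Finset V, resolvingSet G ↑S ∧ S.card = m}

/-! ### Auxiliary lemmas -/

section Aux

open Finset SimpleGraph

/-- Vertex type of the Johnson/Kneser graphs. -/
abbrev KVert (n k : ℕ) := {s : Finset (Fin n) // s.card = k}

lemma perm_of_card_subtype_eq {α : Type*} [Fintype α] (p q : α → Prop)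
    [DecidablePred p] [DecidablePred q]
    (h : Fintype.card {a // p a} = Fintype.card {a // q a}) :
    ∃ σ : Equiv.Perm α, ∀ a, p a ↔ q (σ a) := by
  have h' : Fintype.card {a // ¬ p a} = Fintype.card {a // ¬ q a} := by
    rw [Fintype.card_subtype_compl, Fintype.card_subtype_compl, h]
  refine ⟨Equiv.subtypeCongr (Fintype.equivOfCardEq h) (Fintype.equivOfCardEq h'), fun a => ?_⟩
  by_cases ha : p a
  · have : Equiv.subtypeCongr (Fintype.equivOfCardEq h) (Fintype.equivOfCardEq h') a
        = ((Fintype.equivOfCardEq h) ⟨a, ha⟩ : {a // q a}).1 := by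
      simp [Equiv.subtypeCongr, Equiv.sumCompl_symm_apply_of_pos ha]
    rw [this]
    exact iff_of_true ha ((Fintype.equivOfCardEq h) ⟨a, ha⟩).2
  · have : Equiv.subtypeCongr (Fintype.equivOfCardEq h) (Fintype.equivOfCardEq h') a
        = ((Fintype.equivOfCardEq h') ⟨a, ha⟩ : {a // ¬ q a}).1 := by
      simp [Equiv.subtypeCongr, Equiv.sumCompl_symm_apply_of_neg ha]
    rw [this]
    exact iff_of_false ha ((Fintype.equivOfCardEq h') ⟨a, ha⟩).2

lemma card_subtype_mem {n : ℕ} (A X : Finset (Fin n)) :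
    Fintype.card {a : {x : Fin n // x ∈ X} // a.1 ∈ A} = (A ∩ X).card := by
  rw [Fintype.card_congr (Equiv.subtypeSubtypeEquivSubtypeInter _ _)]
  rw [Fintype.card_subtype]
  congr 1
  ext x
  simp [Finset.mem_inter, and_comm]

lemma card_subtype_notmem {n : ℕ} (A X : Finset (Fin n)) :
    Fintype.card {a : {x : Fin n // ¬ x ∈ X} // a.1 ∈ A} = (A \ X).card := by
  rw [Fintype.card_congr (Equiv.subtypeSubtypeEquivSubtypeInter _ _)]
  rw [Fintype.card_subtype]
  congr 1
  ext x
  simp [Finset.mem_sdiff, and_comm]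

lemma exists_perm_finsets {n : ℕ} (A B X : Finset (Fin n)) (hAB : A.card = B.card)
    (hX : (A ∩ X).card = (B ∩ X).card) :
    ∃ σ : Equiv.Perm (Fin n), (∀ a, a ∈ A ↔ σ a ∈ B) ∧ (∀ a, a ∈ X ↔ σ a ∈ X) := by
  have h1 : Fintype.card {a : {x : Fin n // x ∈ X} // a.1 ∈ A}
      = Fintype.card {a : {x : Fin n // x ∈ X} // a.1 ∈ B} := by
    rw [card_subtype_mem, card_subtype_mem, hX]
  obtain ⟨σin, hin⟩ := perm_of_card_subtype_eq _ _ h1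
  have hsd : (A \ X).card = (B \ X).card := by
    have h3 := Finset.card_inter_add_card_sdiff A X
    have h4 := Finset.card_inter_add_card_sdiff B X
    omega
  have h2 : Fintype.card {a : {x : Fin n // ¬ x ∈ X} // a.1 ∈ A}
      = Fintype.card {a : {x : Fin n // ¬ x ∈ X} // a.1 ∈ B} := by
    rw [card_subtype_notmem, card_subtype_notmem, hsd]
  obtain ⟨σout, hout⟩ := perm_of_card_subtype_eq _ _ h2
  refine ⟨Equiv.Perm.subtypeCongr σin σout, fun a => ?_, fun a => ?_⟩
  · by_cases hx : a ∈ X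
    · rw [Equiv.Perm.subtypeCongr.left_apply σin σout hx]
      exact hin ⟨a, hx⟩
    · rw [Equiv.Perm.subtypeCongr.right_apply σin σout hx]
      exact hout ⟨a, hx⟩
  · by_cases hx : a ∈ X
    · rw [Equiv.Perm.subtypeCongr.left_apply σin σout hx]
      exact iff_of_true hx (σin ⟨a, hx⟩).2
    · rw [Equiv.Perm.subtypeCongr.right_apply σin σout hx]
      exact iff_of_false hx (σout ⟨a, hx⟩).2

lemma image_eq_of_iff {n : ℕ} {A B : Finset (Fin n)} {σ : Equiv.Perm (Fin n)}
    (h : ∀ a, a ∈ A ↔ σ a ∈ B) : A.image σ = B := by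
  ext b
  simp only [Finset.mem_image]
  constructor
  · rintro ⟨a, ha, rfl⟩
    exact (h a).1 ha
  · intro hb
    exact ⟨σ.symm b, (h _).2 (by simpa using hb), by simp⟩

/-- The vertex map induced by a permutation of the ground set. -/
def permVert {n k : ℕ} (σ : Equiv.Perm (Fin n)) (u : KVert n k) : KVert n k :=
  ⟨u.1.image σ, by rw [Finset.card_image_of_injective _ σ.injective, u.2]⟩

/-- The equivalence on vertices induced by a permutation of the ground set. -/
def permVertEquiv {n k : ℕ} (σ : Equiv.Perm (Fin n)) : KVert n k ≃ KVert n k where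
  toFun := permVert σ
  invFun := permVert σ.symm
  left_inv u := Subtype.ext (by simp [permVert, Finset.image_image])
  right_inv u := Subtype.ext (by simp [permVert, Finset.image_image])

/-- A permutation of the ground set induces an automorphism of the Kneser graph. -/
def kneserIso {n k : ℕ} (σ : Equiv.Perm (Fin n)) : kneserGraph n k ≃g kneserGraph n k where
  toEquiv := permVertEquiv σ
  map_rel_iff' := by
    intro u v
    show (permVertEquiv σ u ≠ permVertEquiv σ v ∧
        Disjoint (u.1.image σ) (v.1.image σ)) ↔ (u ≠ v ∧ Disjoint u.1 v.1)
    rw [Finset.disjoint_image σ.injective, (permVertEquiv σ).injective.ne_iff]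

lemma iso_dist_le {V W : Type*} {G : SimpleGraph V} {G' : SimpleGraph W} (ψ : G ≃g G')
    (u v : V) : G'.dist (ψ u) (ψ v) ≤ G.dist u v := by
  by_cases h : G.Reachable u v
  · obtain ⟨p, hp⟩ := h.exists_walk_length_eq_dist
    calc G'.dist (ψ u) (ψ v) ≤ (p.map ψ.toHom).length := SimpleGraph.dist_le _
      _ = p.length := SimpleGraph.Walk.length_map _ _
      _ = G.dist u v := hp
  · have h2 : ¬ G'.Reachable (ψ u) (ψ v) := by
      intro hr
      obtain ⟨q⟩ := hr
      exact h ⟨(q.map ψ.symm.toHom).copy (ψ.symm_apply_apply u) (ψ.symm_apply_apply v)⟩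
    have e1 : G.dist u v = 0 := by simp [h]
    have e2 : G'.dist (ψ u) (ψ v) = 0 := by simp [h2]
    omega

lemma iso_dist {V W : Type*} {G : SimpleGraph V} {G' : SimpleGraph W} (φ : G ≃g G') (u v : V) :
    G'.dist (φ u) (φ v) = G.dist u v := by
  refine le_antisymm (iso_dist_le φ u v) ?_
  have := iso_dist_le φ.symm (φ u) (φ v)
  simpa using this

lemma kneser_dist_eq_of_inter {n k : ℕ} (u v x : KVert n k)
    (h : (u.1 ∩ x.1).card = (v.1 ∩ x.1).card) :
    (kneserGraph n k).dist u x = (kneserGraph n k).dist v x := by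
  obtain ⟨σ, hAB, hX⟩ := exists_perm_finsets u.1 v.1 x.1 (u.2.trans v.2.symm) h
  have h1 : permVert σ u = v := Subtype.ext (image_eq_of_iff hAB)
  have h2 : permVert σ x = x := Subtype.ext (image_eq_of_iff hX)
  calc (kneserGraph n k).dist u x
      = (kneserGraph n k).dist (kneserIso σ u) (kneserIso σ x) := (iso_dist (kneserIso σ) u x).symm
    _ = (kneserGraph n k).dist v x := by
        show (kneserGraph n k).dist (permVert σ u) (permVert σ x) = _
        rw [h1, h2]

lemma johnson_walk {n k : ℕ} (hk1 : 1 ≤ k) :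
    ∀ m : ℕ, ∀ u v : KVert n k, k - (u.1 ∩ v.1).card = m →
    ∃ p : (johnsonGraph n k).Walk u v, p.length = m := by
  intro m
  induction m with
  | zero =>
    intro u v h
    have hle : (u.1 ∩ v.1).card ≤ k := by
      exact le_trans (Finset.card_le_card Finset.inter_subset_left) (le_of_eq u.2)
    have hck : (u.1 ∩ v.1).card = k := by omega
    have hu : u.1 ∩ v.1 = u.1 :=
      Finset.eq_of_subset_of_card_le Finset.inter_subset_left (by rw [hck, u.2])
    have hv : u.1 ∩ v.1 = v.1 :=
      Finset.eq_of_subset_of_card_le Finset.inter_subset_right (by rw [hck, v.2])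
    have : u = v := Subtype.ext (hu ▸ hv)
    subst this
    exact ⟨SimpleGraph.Walk.nil, rfl⟩
  | succ m ih =>
    intro u v h
    have hle : (u.1 ∩ v.1).card ≤ k := by
      exact le_trans (Finset.card_le_card Finset.inter_subset_left) (le_of_eq u.2)
    have hu1 := Finset.card_inter_add_card_sdiff u.1 v.1
    have hv1 := Finset.card_inter_add_card_sdiff v.1 u.1
    rw [u.2] at hu1
    rw [v.2, Finset.inter_comm] at hv1
    have hune : (u.1 \ v.1).Nonempty := Finset.card_pos.mp (by omega)
    have hvne : (v.1 \ u.1).Nonempty := Finset.card_pos.mp (by omega)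
    obtain ⟨a, ha⟩ := hune
    obtain ⟨b, hb⟩ := hvne
    rw [Finset.mem_sdiff] at ha hb
    have hbe : b ∉ u.1.erase a := fun hmem => hb.2 (Finset.mem_of_mem_erase hmem)
    refine ?_
    set u' : KVert n k := ⟨insert b (u.1.erase a), by
      rw [Finset.card_insert_of_notMem hbe, Finset.card_erase_of_mem ha.1, u.2]; omega⟩ with hu'
    have hadj : (johnsonGraph n k).Adj u u' := by
      constructor
      · intro he
        exact hb.2 (by rw [he]; exact Finset.mem_insert_self _ _)
      · have hii : u.1 ∩ u'.1 = u.1.erase a := by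
          ext x
          simp only [hu', Finset.mem_inter, Finset.mem_insert, Finset.mem_erase]
          constructor
          · rintro ⟨hxu, rfl | ⟨hxa, _⟩⟩
            · exact absurd hxu hb.2
            · exact ⟨hxa, hxu⟩
          · rintro ⟨hxa, hxu⟩
            exact ⟨hxu, Or.inr ⟨hxa, hxu⟩⟩
        rw [hii, Finset.card_erase_of_mem ha.1, u.2]
    have hcard : (u'.1 ∩ v.1).card = (u.1 ∩ v.1).card + 1 := by
      have hiv : u'.1 ∩ v.1 = insert b (u.1 ∩ v.1) := by
        ext x
        simp only [hu', Finset.mem_inter, Finset.mem_insert, Finset.mem_erase]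
        constructor
        · rintro ⟨rfl | ⟨hxa, hxu⟩, hxv⟩
          · exact Or.inl rfl
          · exact Or.inr ⟨hxu, hxv⟩
        · rintro (rfl | ⟨hxu, hxv⟩)
          · exact ⟨Or.inl rfl, hb.1⟩
          · exact ⟨Or.inr ⟨fun hxa => ha.2 (hxa ▸ hxv), hxu⟩, hxv⟩
      rw [hiv, Finset.card_insert_of_notMem (fun hmem => hb.2 (Finset.mem_inter.mp hmem).1)]
    obtain ⟨p, hp⟩ := ih u' v (by omega)
    exact ⟨SimpleGraph.Walk.cons hadj p, by simp [hp]⟩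

lemma johnson_walk_le {n k : ℕ} (hk1 : 1 ≤ k) {u v : KVert n k}
    (p : (johnsonGraph n k).Walk u v) : k - (u.1 ∩ v.1).card ≤ p.length := by
  induction p with
  | nil =>
    rename_i w
    rw [Finset.inter_self, w.2]
    omega
  | @cons a b c h q ih =>
    obtain ⟨hne, hcap⟩ := h
    have h1 := Finset.card_inter_add_card_sdiff b.1 a.1
    rw [b.2] at h1
    have h2 : (b.1 ∩ a.1).card = k - 1 := by rw [Finset.inter_comm]; exact hcap
    have hsub : b.1 ∩ c.1 ⊆ (a.1 ∩ c.1) ∪ (b.1 \ a.1) := by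
      intro x hx
      rw [Finset.mem_inter] at hx
      by_cases hxa : x ∈ a.1
      · exact Finset.mem_union_left _ (Finset.mem_inter.mpr ⟨hxa, hx.2⟩)
      · exact Finset.mem_union_right _ (Finset.mem_sdiff.mpr ⟨hx.1, hxa⟩)
    have h3 := (Finset.card_le_card hsub).trans (Finset.card_union_le _ _)
    show k - (a.1 ∩ c.1).card ≤ q.length + 1
    omega

lemma johnson_dist {n k : ℕ} (hk1 : 1 ≤ k) (u v : KVert n k) :
    (johnsonGraph n k).dist u v = k - (u.1 ∩ v.1).card := by
  obtain ⟨p, hp⟩ := johnson_walk hk1 _ u v rfl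
  refine le_antisymm (hp ▸ SimpleGraph.dist_le p) ?_
  have hr : (johnsonGraph n k).Reachable u v := ⟨p⟩
  obtain ⟨q, hq⟩ := hr.exists_walk_length_eq_dist
  rw [← hq]
  exact johnson_walk_le hk1 q

lemma kneser_reachable {n k : ℕ} (hk1 : 1 ≤ k) (hn : 2 * k < n) (u v : KVert n k) :
    (kneserGraph n k).Reachable u v := by
  obtain ⟨p, -⟩ := johnson_walk (n := n) hk1 _ u v rfl
  induction p with
  | nil => exact SimpleGraph.Reachable.refl _
  | @cons a b c h q ih =>
    refine SimpleGraph.Reachable.trans ?_ ih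
    obtain ⟨hne, hcap⟩ := h
    have hcup : (a.1 ∪ b.1).card = k + 1 := by
      have := Finset.card_union_add_card_inter a.1 b.1
      rw [a.2, b.2, hcap] at this
      omega
    have hcompl : k ≤ ((a.1 ∪ b.1)ᶜ).card := by
      rw [Finset.card_compl, hcup]
      simp only [Fintype.card_fin]
      omega
    obtain ⟨t, hts, htc⟩ := Finset.exists_subset_card_eq hcompl
    set x : KVert n k := ⟨t, htc⟩ with hx
    have hdu : Disjoint a.1 t := by
      rw [Finset.disjoint_left]
      intro y hya hyt
      exact (Finset.mem_compl.mp (hts hyt)) (Finset.mem_union_left _ hya)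
    have hdw : Disjoint b.1 t := by
      rw [Finset.disjoint_left]
      intro y hyb hyt
      exact (Finset.mem_compl.mp (hts hyt)) (Finset.mem_union_right _ hyb)
    have hxu : a ≠ x := by
      intro he
      have h1 : a.1 = t := congrArg Subtype.val he
      rw [h1] at hdu
      have h2 : t = ⊥ := disjoint_self.mp hdu
      rw [h2] at htc
      simp at htc
      omega
    have hxw : b ≠ x := by
      intro he
      have h1 : b.1 = t := congrArg Subtype.val he
      rw [h1] at hdw
      have h2 : t = ⊥ := disjoint_self.mp hdw
      rw [h2] at htc
      simp at htc
      omega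
    have adj1 : (kneserGraph n k).Adj a x := ⟨hxu, hdu⟩
    have adj2 : (kneserGraph n k).Adj x b := ⟨fun he => hxw he.symm, hdw.symm⟩
    exact adj1.reachable.trans adj2.reachable

end Aux

/-- For `n > 2k ≥ 2`, any resolving set for the Kneser graph `K(n,k)` is also a
resolving set for the Johnson graph `J(n,k)`; consequently `β(J(n,k)) ≤ β(K(n,k))`. -/
theorem kneser_resolving_implies_johnson (n k : ℕ) (hk : 2 ≤ 2 * k) (hn : 2 * k < n) :
    (∀ S : Set {s : Finset (Fin n) // s.card = k},
      resolvingSet (kneserGraph n k) S → resolvingSet (johnsonGraph n k) S) ∧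
    metricDim (johnsonGraph n k) ≤ metricDim (kneserGraph n k) := by
  have hk1 : 1 ≤ k := by omega
  have main : ∀ S : Set (KVert n k),
      resolvingSet (kneserGraph n k) S → resolvingSet (johnsonGraph n k) S := by
    intro S hS u v huv
    obtain ⟨x, hxS, hx⟩ := hS u v huv
    refine ⟨x, hxS, fun hJ => hx ?_⟩
    rw [johnson_dist hk1, johnson_dist hk1] at hJ
    have hle1 : (u.1 ∩ x.1).card ≤ k := by
      exact le_trans (Finset.card_le_card Finset.inter_subset_left) (le_of_eq u.2)
    have hle2 : (v.1 ∩ x.1).card ≤ k := by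
      exact le_trans (Finset.card_le_card Finset.inter_subset_left) (le_of_eq v.2)
    exact kneser_dist_eq_of_inter u v x (by omega)
  refine ⟨main, ?_⟩
  have hres : resolvingSet (kneserGraph n k) (↑(Finset.univ : Finset (KVert n k))) := by
    intro u v huv
    refine ⟨u, by simp, ?_⟩
    have h0 : (kneserGraph n k).dist u u = 0 := SimpleGraph.dist_self
    have hpos : 0 < (kneserGraph n k).dist v u :=
      (kneser_reachable hk1 hn v u).pos_dist_of_ne (fun he => huv he.symm)
    omega
  have hne : {m | ∃ S : Finset (KVert n k),
      resolvingSet (kneserGraph n k) ↑S ∧ S.card = m}.Nonempty :=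
    ⟨_, Finset.univ, hres, rfl⟩
  have hmem := Nat.sInf_mem hne
  obtain ⟨S, hS, hcard⟩ := hmem
  exact Nat.sInf_le ⟨S, main _ hS, hcard⟩
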